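/- Let Q : ℝ² → ℝ be a compactly supported, bounded measurable function (thought of as a space-time kernel Q(t,x)) that integrates to zero, annihilates the functions (t,x) ↦ 1 and (t,x) ↦ x, and let P denote the heat kernel on ℝ (with P(t,x) = 0 for t ≤ 0). Then there exists a constant C such that the space-time convolution P ⋆ Q satisfies |(P ⋆ Q)(z)| ≤ C (|z|^{-1} ∧ |z|^{-3}) for all z ≠ 0, where |z| = |x| + √|t| denotes the parabolic norm of z = (t,x). -/

import Mathlib

set_option maxHeartbeats 1000000


open MeasureTheory Real

/-- The heat kernel on `ℝ` as a space-time kernel, vanishing for `t ≤ 0`.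
Here `z = (t, x)`. -/
noncomputable def heatKernelST (z : ℝ × ℝ) : ℝ :=
  if 0 < z.1 then (Real.sqrt (4 * Real.pi * z.1))⁻¹ * Real.exp (-(z.2 ^ 2) / (4 * z.1)) else 0

/-- The parabolic norm `|(t,x)| = √|t| + |x|` on space-time `ℝ²`. -/
noncomputable def pNorm (z : ℝ × ℝ) : ℝ := Real.sqrt |z.1| + |z.2|


noncomputable def Pf (t x : ℝ) : ℝ :=
  (Real.sqrt (4 * Real.pi * t))⁻¹ * Real.exp (-(x ^ 2) / (4 * t))

noncomputable def Pd (t x : ℝ) : ℝ := -(x / (2 * t)) * Pf t x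

noncomputable def Pdd (t x : ℝ) : ℝ := (x ^ 2 / (4 * t ^ 2) - 1 / (2 * t)) * Pf t x

lemma heatKernelST_pos_eq {z : ℝ × ℝ} (h : 0 < z.1) : heatKernelST z = Pf z.1 z.2 := by
  simp [heatKernelST, Pf, h]

lemma heatKernelST_nonpos_eq {z : ℝ × ℝ} (h : z.1 ≤ 0) : heatKernelST z = 0 := by
  simp [heatKernelST, not_lt.2 h]

lemma Pf_nonneg {t x : ℝ} : 0 ≤ Pf t x := by
  unfold Pf
  positivity

lemma heatKernelST_nonneg (z : ℝ × ℝ) : 0 ≤ heatKernelST z := by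
  unfold heatKernelST
  split
  · exact mul_nonneg (by positivity) (Real.exp_nonneg _)
  · exact le_refl _

lemma exp_quartic_le {x : ℝ} (hx : 0 ≤ x) :
    1 + x + x ^ 2 / 2 + x ^ 3 / 6 + x ^ 4 / 24 ≤ Real.exp x := by
  have h := Real.sum_le_exp_of_nonneg hx 5
  norm_num [Finset.sum_range_succ, Nat.factorial] at h
  linarith [h]


lemma sqrt4pi_ge : (2:ℝ) ≤ Real.sqrt (4 * Real.pi) := by
  have : (2:ℝ) = Real.sqrt 4 := by
    rw [show (4:ℝ) = 2^2 by norm_num, Real.sqrt_sq (by norm_num)]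
  rw [this]
  exact Real.sqrt_le_sqrt (by nlinarith [Real.pi_gt_three])

lemma Pf_le_key {t x : ℝ} (ht : 0 < t) :
    Pf t x ≤ (2 * Real.sqrt t)⁻¹ * (Real.exp (x ^ 2 / (4 * t)))⁻¹ := by
  have hu : 0 < Real.sqrt t := Real.sqrt_pos.2 ht
  have hs : Real.sqrt (4 * Real.pi * t) = Real.sqrt (4 * Real.pi) * Real.sqrt t := by
    rw [Real.sqrt_mul (by positivity)]
  have h2 : 2 * Real.sqrt t ≤ Real.sqrt (4 * Real.pi * t) := by
    rw [hs]; exact mul_le_mul_of_nonneg_right sqrt4pi_ge hu.le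
  have hinv : (Real.sqrt (4 * Real.pi * t))⁻¹ ≤ (2 * Real.sqrt t)⁻¹ :=
    inv_anti₀ (by positivity) h2
  have he : Real.exp (-(x ^ 2) / (4 * t)) = (Real.exp (x ^ 2 / (4 * t)))⁻¹ := by
    rw [← Real.exp_neg]; ring_nf
  rw [Pf, he]
  exact mul_le_mul_of_nonneg_right hinv (by positivity)

/-- Gaussian bound of order 1. -/
lemma Pf_le_one {t x : ℝ} (ht : 0 < t) : Pf t x ≤ (Real.sqrt t + |x|)⁻¹ := by
  set u := Real.sqrt t with hu_def
  have hu : 0 < u := Real.sqrt_pos.2 ht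
  have ht2 : t = u ^ 2 := (Real.sq_sqrt ht.le).symm
  set a := |x| with ha_def
  have ha : 0 ≤ a := abs_nonneg x
  have hx2 : x ^ 2 = a ^ 2 := (sq_abs x).symm
  set X := x ^ 2 / (4 * t) with hX_def
  have hXnn : 0 ≤ X := by positivity
  have hexp : 1 + X ≤ Real.exp X := by linarith [Real.add_one_le_exp X]
  have key : u + a ≤ 2 * u * Real.exp X := by
    have hX' : X * (4 * u ^ 2) = a ^ 2 := by
      rw [hX_def, hx2, ht2]; field_simp
    nlinarith [sq_nonneg (a - u), mul_le_mul_of_nonneg_left hexp (by positivity : (0:ℝ) ≤ 2 * u)]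
  calc Pf t x ≤ (2 * u)⁻¹ * (Real.exp X)⁻¹ := Pf_le_key ht
    _ = (2 * u * Real.exp X)⁻¹ := by ring
    _ ≤ (u + a)⁻¹ := inv_anti₀ (by positivity) key

/-- Gaussian bound of order 3 with smallness in `t`. -/
lemma Pf_le_three {t x : ℝ} (ht : 0 < t) :
    Pf t x ≤ 16 * t / (Real.sqrt t + |x|) ^ 3 := by
  set u := Real.sqrt t with hu_def
  have hu : 0 < u := Real.sqrt_pos.2 ht
  have ht2 : t = u ^ 2 := (Real.sq_sqrt ht.le).symm
  set a := |x| with ha_def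
  have ha : 0 ≤ a := abs_nonneg x
  have hx2 : x ^ 2 = a ^ 2 := (sq_abs x).symm
  set X := x ^ 2 / (4 * t) with hX_def
  have hXnn : 0 ≤ X := by positivity
  have hexp : 1 + X + X ^ 2 / 2 + X ^ 3 / 6 ≤ Real.exp X := by
    nlinarith [exp_quartic_le hXnn, pow_nonneg hXnn 4]
  have hX' : X * (4 * u ^ 2) = a ^ 2 := by
    rw [hX_def, hx2, ht2]; field_simp
  have key : (u + a) ^ 3 ≤ 16 * u ^ 2 * (2 * u * Real.exp X) := by
    have h1 : (u + a) ^ 3 ≤ 16 * u ^ 2 * (2 * u * (1 + X + X ^ 2 / 2 + X ^ 3 / 6)) := by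
      have e1 : X = a ^ 2 / (4 * u ^ 2) := by
        field_simp at hX' ⊢; linarith
      rw [e1, ← sub_nonneg]
      have expand : 16 * u ^ 2 * (2 * u * (1 + a ^ 2 / (4 * u ^ 2) + (a ^ 2 / (4 * u ^ 2)) ^ 2 / 2 + (a ^ 2 / (4 * u ^ 2)) ^ 3 / 6)) - (u + a) ^ 3
          = (768 * u ^ 6 + 192 * a ^ 2 * u ^ 4 + 24 * a ^ 4 * u ^ 2 + 2 * a ^ 6 - 24 * u ^ 3 * (u + a) ^ 3) / (24 * u ^ 3) := by
        field_simp; ring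
      rw [expand]
      apply div_nonneg _ (by positivity)
      nlinarith [mul_nonneg (sq_nonneg (u - a)) (pow_nonneg hu.le 4), mul_nonneg (mul_nonneg (sq_nonneg (u - a)) (sq_nonneg u)) (sq_nonneg a), pow_nonneg ha 6, pow_nonneg hu.le 6]
    nlinarith [h1, mul_le_mul_of_nonneg_left hexp (by positivity : (0:ℝ) ≤ 16 * u ^ 2 * (2 * u))]
  calc Pf t x ≤ (2 * u)⁻¹ * (Real.exp X)⁻¹ := Pf_le_key ht
    _ = (2 * u * Real.exp X)⁻¹ := by ring
    _ ≤ 16 * t / (u + a) ^ 3 := by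
        rw [ht2, div_eq_mul_inv, ← inv_inv ((16:ℝ) * u ^ 2), ← mul_inv]
        apply inv_anti₀ (by positivity)
        rw [inv_mul_le_iff₀ (by positivity)]
        calc (u + a)^3 ≤ 16 * u ^ 2 * (2 * u * Real.exp X) := key
          _ = 16 * u ^ 2 * (2 * u * Real.exp X) := rfl

/-- Gaussian second-derivative bound of order 3. -/
lemma Pdd_le {t x : ℝ} (ht : 0 < t) : |Pdd t x| ≤ 64 / (Real.sqrt t + |x|) ^ 3 := by
  set u := Real.sqrt t with hu_def
  have hu : 0 < u := Real.sqrt_pos.2 ht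
  have ht2 : t = u ^ 2 := (Real.sq_sqrt ht.le).symm
  set a := |x| with ha_def
  have ha : 0 ≤ a := abs_nonneg x
  have hx2 : x ^ 2 = a ^ 2 := (sq_abs x).symm
  set X := x ^ 2 / (4 * t) with hX_def
  have hXnn : 0 ≤ X := by positivity
  have hexp : 1 + X + X ^ 2 / 2 + X ^ 3 / 6 + X ^ 4 / 24 ≤ Real.exp X := exp_quartic_le hXnn
  have hexppos : 0 < Real.exp X := Real.exp_pos X
  have e1 : X = a ^ 2 / (4 * u ^ 2) := by
    rw [hX_def, hx2, ht2]
  have hcoef : |x ^ 2 / (4 * t ^ 2) - 1 / (2 * t)| ≤ (a ^ 2 + 2 * u ^ 2) / (4 * u ^ 4) := by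
    rw [hx2, ht2]
    have h1 : a ^ 2 / (4 * (u^2) ^ 2) = a ^ 2 / (4 * u ^ 4) := by ring_nf
    have h2 : (1:ℝ) / (2 * u ^ 2) = 2 * u ^ 2 / (4 * u ^ 4) := by
      field_simp; ring
    rw [abs_le]
    constructor
    · have : 0 ≤ a ^ 2 / (4 * (u^2) ^ 2) := by positivity
      have : 0 ≤ (1:ℝ) / (2 * u ^ 2) := by positivity
      rw [h1, h2]
      have hle : (2 * u ^ 2 : ℝ) / (4 * u ^ 4) ≤ (a ^ 2 + 2 * u ^ 2) / (4 * u ^ 4) := by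
        apply div_le_div_of_nonneg_right _ (by positivity)
        · nlinarith
      nlinarith [div_nonneg (sq_nonneg a) (by positivity : (0:ℝ) ≤ 4 * u ^ 4)]
    · rw [h1, h2]
      have : (0:ℝ) ≤ 2 * u ^ 2 / (4 * u ^ 4) := by positivity
      have hle : (a ^ 2 : ℝ) / (4 * u ^ 4) ≤ (a ^ 2 + 2 * u ^ 2) / (4 * u ^ 4) := by
        apply div_le_div_of_nonneg_right _ (by positivity)
        · nlinarith
      linarith
  have key : (a ^ 2 + 2 * u ^ 2) * (u + a) ^ 3 ≤ 512 * u ^ 5 * Real.exp X := by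
    have h1 : (a ^ 2 + 2 * u ^ 2) * (u + a) ^ 3
        ≤ 512 * u ^ 5 * (1 + X + X ^ 2 / 2 + X ^ 3 / 6 + X ^ 4 / 24) := by
      rw [e1, ← sub_nonneg]
      have expand : 512 * u ^ 5 * (1 + a ^ 2 / (4 * u ^ 2) + (a ^ 2 / (4 * u ^ 2)) ^ 2 / 2
            + (a ^ 2 / (4 * u ^ 2)) ^ 3 / 6 + (a ^ 2 / (4 * u ^ 2)) ^ 4 / 24)
            - (a ^ 2 + 2 * u ^ 2) * (u + a) ^ 3
          = (24576 * u ^ 8 + 6144 * a ^ 2 * u ^ 6 + 768 * a ^ 4 * u ^ 4 + 64 * a ^ 6 * u ^ 2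
            + 4 * a ^ 8 - 48 * u ^ 3 * ((a ^ 2 + 2 * u ^ 2) * (u + a) ^ 3)) / (48 * u ^ 3) := by
        field_simp; ring
      rw [expand]
      apply div_nonneg _ (by positivity)
      nlinarith [sq_nonneg (u ^ 4 - a * u ^ 3), sq_nonneg (a * u ^ 3 - a ^ 2 * u ^ 2),
        sq_nonneg (a ^ 2 * u ^ 2 - a ^ 3 * u), pow_nonneg ha 8, pow_nonneg hu.le 8,
        mul_nonneg (mul_nonneg ha hu.le) (sq_nonneg (a * u))]
    nlinarith [mul_le_mul_of_nonneg_left hexp (by positivity : (0:ℝ) ≤ 512 * u ^ 5)]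
  have hPf : Pf t x ≤ (2 * u)⁻¹ * (Real.exp X)⁻¹ := Pf_le_key ht
  have habs : |Pdd t x| ≤ ((a ^ 2 + 2 * u ^ 2) / (4 * u ^ 4)) * ((2 * u)⁻¹ * (Real.exp X)⁻¹) := by
    rw [Pdd, abs_mul, abs_of_nonneg (by unfold Pf; positivity : 0 ≤ Pf t x)]
    exact mul_le_mul hcoef hPf (by unfold Pf; positivity) (by positivity)
  calc |Pdd t x| ≤ ((a ^ 2 + 2 * u ^ 2) / (4 * u ^ 4)) * ((2 * u)⁻¹ * (Real.exp X)⁻¹) := habs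
    _ = (a ^ 2 + 2 * u ^ 2) / (8 * u ^ 5 * Real.exp X) := by
        rw [div_eq_mul_inv, div_eq_mul_inv, mul_inv, mul_inv]
        ring
    _ ≤ 64 / (u + a) ^ 3 := by
        rw [div_le_div_iff₀ (by positivity) (by positivity)]
        nlinarith [key]

lemma hasDerivAt_Pf_x {t : ℝ} (ht : 0 < t) (x : ℝ) :
    HasDerivAt (fun y => Pf t y) (Pd t x) x := by
  have h1 : HasDerivAt (fun y : ℝ => -(y ^ 2) / (4 * t)) (-(2 * x) / (4 * t)) x := by
    exact (((hasDerivAt_pow 2 x).neg).div_const (4 * t)).congr_deriv (by ring)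
  have h2 := (h1.exp).const_mul ((Real.sqrt (4 * Real.pi * t))⁻¹)
  refine h2.congr_deriv (Eq.symm ?_)
  rw [Pd, Pf]
  field_simp
  ring

lemma hasDerivAt_Pd_x {t : ℝ} (ht : 0 < t) (x : ℝ) :
    HasDerivAt (fun y => Pd t y) (Pdd t x) x := by
  have h1 : HasDerivAt (fun y : ℝ => -(y / (2 * t))) (-(1 / (2 * t))) x := by
    exact ((hasDerivAt_id x).div_const (2 * t)).neg.congr_deriv (by ring)
  have h2 := h1.mul (hasDerivAt_Pf_x ht x)
  refine h2.congr_deriv (Eq.symm ?_)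
  rw [Pdd, Pd]
  have hPf : Pf t x = Pf t x := rfl
  field_simp
  ring

lemma hasDerivAt_Pf_t {t : ℝ} (ht : 0 < t) (x : ℝ) :
    HasDerivAt (fun s => Pf s x) (Pdd t x) t := by
  have hS : 0 < 4 * Real.pi * t := by positivity
  have hsq : Real.sqrt (4 * Real.pi * t) ^ 2 = 4 * Real.pi * t := Real.sq_sqrt hS.le
  have hsqpos : 0 < Real.sqrt (4 * Real.pi * t) := Real.sqrt_pos.2 hS
  -- derivative of s ↦ sqrt (4πs)
  have hlin : HasDerivAt (fun s : ℝ => 4 * Real.pi * s) (4 * Real.pi) t :=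
    (hasDerivAt_id t).const_mul (4 * Real.pi) |>.congr_deriv (by ring)
  have hsqrt : HasDerivAt (fun s : ℝ => Real.sqrt (4 * Real.pi * s))
      (1 / (2 * Real.sqrt (4 * Real.pi * t)) * (4 * Real.pi)) t :=
    (Real.hasDerivAt_sqrt hS.ne').comp t hlin
  have hinv : HasDerivAt (fun s : ℝ => (Real.sqrt (4 * Real.pi * s))⁻¹)
      (-(1 / (2 * Real.sqrt (4 * Real.pi * t)) * (4 * Real.pi)) / (Real.sqrt (4 * Real.pi * t)) ^ 2) t :=
    hsqrt.inv hsqpos.ne'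
  -- derivative of s ↦ exp (-(x^2)/(4s))
  have hlin2 : HasDerivAt (fun s : ℝ => 4 * s) 4 t :=
    (hasDerivAt_id t).const_mul 4 |>.congr_deriv (by ring)
  have hinner : HasDerivAt (fun s : ℝ => -(x ^ 2) / (4 * s))
      (x ^ 2 / (4 * t ^ 2)) t := by
    have h := ((hlin2.inv (by positivity : (4:ℝ) * t ≠ 0)).const_mul (-(x ^ 2)))
    have he : ∀ s : ℝ, -(x ^ 2) * (4 * s)⁻¹ = -(x ^ 2) / (4 * s) := fun s => by
      rw [div_eq_mul_inv]
    refine (h.congr_deriv ?_).congr_of_eventuallyEq (Filter.Eventually.of_forall fun s => (he s).symm)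
    field_simp
  have hexp := hinner.exp
  have hprod := hinv.mul hexp
  refine hprod.congr_deriv (Eq.symm ?_)
  rw [Pdd, Pf]
  set s0 := Real.sqrt (4 * Real.pi * t) with hs0
  have key : -(1 / (2 * s0) * (4 * Real.pi)) / s0 ^ 2 = -(1 / (2 * t)) * s0⁻¹ := by
    rw [hsq]
    field_simp
  rw [key]
  ring

/-- MVT with absolute values on `uIcc`. -/
lemma mvt_abs {f f' : ℝ → ℝ} {a b C : ℝ}
    (hd : ∀ x ∈ Set.uIcc a b, HasDerivAt f (f' x) x)
    (hb : ∀ x ∈ Set.uIcc a b, |f' x| ≤ C) :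
    |f b - f a| ≤ C * |b - a| := by
  have h := (convex_uIcc a b).norm_image_sub_le_of_norm_hasDerivWithin_le
    (fun x hx => (hd x hx).hasDerivWithinAt)
    (fun x hx => by simpa [Real.norm_eq_abs] using hb x hx)
    Set.left_mem_uIcc Set.right_mem_uIcc
  simpa [Real.norm_eq_abs] using h

lemma mem_uIcc_dist {x y ξ : ℝ} (hξ : ξ ∈ Set.uIcc (x - y) x) : |ξ - x| ≤ |y| := by
  rw [Set.mem_uIcc] at hξ
  rw [abs_le]
  have h1 := le_abs_self y
  have h2 := neg_abs_le y
  rcases hξ with ⟨ha, hb⟩ | ⟨ha, hb⟩ <;> constructor <;> linarith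

/-- Second order Taylor bound via two MVTs. -/
lemma taylor2_abs {h h' h'' : ℝ → ℝ} {x y C : ℝ} (hC : 0 ≤ C)
    (hd : ∀ ξ ∈ Set.uIcc (x - y) x, HasDerivAt h (h' ξ) ξ)
    (hd2 : ∀ ξ ∈ Set.uIcc (x - y) x, HasDerivAt h' (h'' ξ) ξ)
    (hb : ∀ ξ ∈ Set.uIcc (x - y) x, |h'' ξ| ≤ C) :
    |h (x - y) - h x + y * h' x| ≤ C * y ^ 2 := by
  set g : ℝ → ℝ := fun ξ => h ξ - ξ * h' x with hg
  have hgd : ∀ ξ ∈ Set.uIcc (x - y) x, HasDerivAt g (h' ξ - h' x) ξ := fun ξ hξ =>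
    (hd ξ hξ).sub ((hasDerivAt_id ξ).mul_const (h' x) |>.congr_deriv (by ring))
  have hgb : ∀ ξ ∈ Set.uIcc (x - y) x, |h' ξ - h' x| ≤ C * |y| := by
    intro ξ hξ
    have hsub : Set.uIcc ξ x ⊆ Set.uIcc (x - y) x :=
      Set.uIcc_subset_uIcc hξ Set.right_mem_uIcc
    have h1 := mvt_abs (fun σ hσ => hd2 σ (hsub hσ)) (fun σ hσ => hb σ (hsub hσ))
    calc |h' ξ - h' x| = |h' x - h' ξ| := abs_sub_comm _ _
      _ ≤ C * |ξ - x| := by simpa [abs_sub_comm] using h1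
      _ ≤ C * |y| := mul_le_mul_of_nonneg_left (mem_uIcc_dist hξ) hC
  have h2 := mvt_abs hgd hgb
  have he : g (x - y) - g x = h (x - y) - h x + y * h' x := by
    simp only [hg]; ring
  have he2 : |x - (x - y)| = |y| := by rw [show x - (x - y) = y by ring]
  rw [abs_sub_comm, he2, he] at h2
  calc |h (x - y) - h x + y * h' x| ≤ C * |y| * |y| := h2
    _ = C * y ^ 2 := by rw [mul_assoc, ← abs_mul, ← sq, abs_of_nonneg (sq_nonneg y)]

/-- The pointwise second-order estimate in the far regime. -/
lemma heat_pointwise {r t x s y : ℝ} (hr : 1 ≤ r) (hs : |s| ≤ r) (hy : |y| ≤ r)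
    (hN : 8 * r ≤ Real.sqrt |t| + |x|) :
    |heatKernelST (t - s, x - y) - heatKernelST (t, x)
        + y * (if 0 < t then Pd t x else 0)|
      ≤ 10240 * r ^ 2 / (Real.sqrt |t| + |x|) ^ 3 := by
  obtain ⟨N, hNdef⟩ : ∃ N : ℝ, N = Real.sqrt |t| + |x| := ⟨_, rfl⟩
  rw [← hNdef] at hN ⊢
  have hrpos : (0:ℝ) < r := lt_of_lt_of_le one_pos hr
  have hNpos : (0:ℝ) < N := by linarith
  have hN3 : (0:ℝ) < N ^ 3 := pow_pos hNpos 3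
  have hrN : r ≤ N / 8 := by linarith
  have hy2 : y ^ 2 ≤ r ^ 2 := by nlinarith [abs_nonneg y, sq_abs y]
  have hdich : N / 2 ≤ Real.sqrt |t| ∨ N / 2 ≤ |x| := by
    rcases le_total (Real.sqrt |t|) |x| with h | h
    · right; rw [hNdef]; linarith
    · left; rw [hNdef]; linarith
  have hquarter_cube : ∀ A : ℝ, N / 4 ≤ A → 64 / A ^ 3 ≤ 4096 / N ^ 3 := by
    intro A hA
    have hApos : 0 < A := lt_of_lt_of_le (by linarith) hA
    rw [div_le_div_iff₀ (pow_pos hApos 3) hN3]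
    have h3 : (N / 4) ^ 3 ≤ A ^ 3 := pow_le_pow_left₀ (by linarith) hA 3
    have h5 : N ^ 3 / 64 ≤ A ^ 3 := by
      calc N ^ 3 / 64 = (N / 4) ^ 3 := by ring
        _ ≤ A ^ 3 := h3
    linarith
  -- spatial Taylor term
  have hsp : |heatKernelST (t, x - y) - heatKernelST (t, x)
      + y * (if 0 < t then Pd t x else 0)| ≤ 4096 * r ^ 2 / N ^ 3 := by
    by_cases ht : 0 < t
    · rw [heatKernelST_pos_eq (show (0:ℝ) < ((t, x - y) : ℝ × ℝ).1 from ht),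
        heatKernelST_pos_eq (show (0:ℝ) < ((t, x) : ℝ × ℝ).1 from ht), if_pos ht]
    -- `taylor2_abs` with C = 4096 / N ^ 3
      have habs : |t| = t := abs_of_pos ht
      have hbound : ∀ ξ ∈ Set.uIcc (x - y) x, |Pdd t ξ| ≤ 4096 / N ^ 3 := by
        intro ξ hξ
        have hq : N / 4 ≤ Real.sqrt t + |ξ| := by
          rcases hdich with h | h
          · rw [habs] at h
            have := abs_nonneg ξ
            linarith
          · have h1 := mem_uIcc_dist hξ
            have h2 : |x| - |ξ - x| ≤ |ξ| := by
              have := abs_sub_abs_le_abs_sub x ξ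
              have h3 : |x - ξ| = |ξ - x| := abs_sub_comm x ξ
              linarith
            have := Real.sqrt_nonneg t
            linarith
        exact le_trans (Pdd_le ht) (hquarter_cube _ hq)
      have h := taylor2_abs (x := x) (y := y) (C := 4096 / N ^ 3)
        (div_nonneg (by norm_num) hN3.le)
        (fun ξ _ => hasDerivAt_Pf_x ht ξ) (fun ξ _ => hasDerivAt_Pd_x ht ξ) hbound
      calc |Pf t (x - y) - Pf t x + y * Pd t x| ≤ 4096 / N ^ 3 * y ^ 2 := h
        _ ≤ 4096 / N ^ 3 * r ^ 2 :=
            mul_le_mul_of_nonneg_left hy2 (div_nonneg (by norm_num) hN3.le)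
        _ = 4096 * r ^ 2 / N ^ 3 := by ring
    · push_neg at ht
      rw [heatKernelST_nonpos_eq (show ((t, x - y) : ℝ × ℝ).1 ≤ 0 from ht),
        heatKernelST_nonpos_eq (show ((t, x) : ℝ × ℝ).1 ≤ 0 from ht), if_neg (not_lt.2 ht)]
      simp only [sub_zero, sub_self, mul_zero, add_zero, abs_zero]
      exact div_nonneg (by positivity) hN3.le
  -- time difference term
  have htm : |heatKernelST (t - s, x - y) - heatKernelST (t, x - y)| ≤ 6144 * r ^ 2 / N ^ 3 := by
    by_cases ht2 : 2 * r ≤ t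
    · -- MVT in time
      have hprop : ∀ σ ∈ Set.uIcc (t - s) t, 0 < σ ∧ N / 4 ≤ Real.sqrt σ + |x - y| := by
        intro σ hσ
        have hd : |σ - t| ≤ |s| := mem_uIcc_dist hσ
        have hσr : t - r ≤ σ := by
          have h1 := neg_abs_le (σ - t)
          linarith [le_trans hd hs]
        have hσpos : 0 < σ := by linarith
        refine ⟨hσpos, ?_⟩
        rcases hdich with h | h
        · have habs : |t| = t := abs_of_pos (by linarith)
          rw [habs] at h
          have ht4 : (N / 2) ^ 2 ≤ t := by
            have h2 : (N / 2) ^ 2 ≤ Real.sqrt t ^ 2 := pow_le_pow_left₀ (by linarith) h 2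
            rwa [Real.sq_sqrt (by linarith : (0:ℝ) ≤ t)] at h2
          have hσ16 : (N / 4) ^ 2 ≤ σ := by nlinarith
          have := (Real.le_sqrt (by positivity : (0:ℝ) ≤ N / 4) (le_trans (by positivity) hσ16)).2 hσ16
          linarith [abs_nonneg (x - y)]
        · have h2 : |x| - |y| ≤ |x - y| := abs_sub_abs_le_abs_sub x y
          have := Real.sqrt_nonneg σ
          linarith
      have hts : 0 < t - s := by linarith [le_abs_self s]
      rw [heatKernelST_pos_eq (show (0:ℝ) < ((t - s, x - y) : ℝ × ℝ).1 from hts),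
        heatKernelST_pos_eq (show (0:ℝ) < ((t, x - y) : ℝ × ℝ).1 by dsimp only; linarith)]
      have h := mvt_abs (f := fun σ => Pf σ (x - y)) (f' := fun σ => Pdd σ (x - y))
        (a := t) (b := t - s) (C := 4096 / N ^ 3) ?_ ?_
      · have he : |t - s - t| = |s| := by rw [show t - s - t = -s by ring, abs_neg]
        rw [he] at h
        calc |Pf (t - s) (x - y) - Pf t (x - y)| ≤ 4096 / N ^ 3 * |s| := h
          _ ≤ 4096 / N ^ 3 * r :=
              mul_le_mul_of_nonneg_left hs (div_nonneg (by norm_num) hN3.le)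
          _ ≤ 6144 * r ^ 2 / N ^ 3 := by
              rw [div_mul_eq_mul_div, div_le_div_iff₀ hN3 hN3]
              nlinarith [mul_le_mul_of_nonneg_right (show r ≤ r ^ 2 by nlinarith) hN3.le]
      · intro σ hσ
        rw [Set.uIcc_comm] at hσ
        exact hasDerivAt_Pf_t (hprop σ hσ).1 (x - y)
      · intro σ hσ
        rw [Set.uIcc_comm] at hσ
        exact le_trans (Pdd_le (hprop σ hσ).1) (hquarter_cube _ (hprop σ hσ).2)
    · push_neg at ht2
      by_cases ht3 : t ≤ -r
      · have h1 : t - s ≤ 0 := by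
          have := neg_abs_le s
          linarith
        rw [heatKernelST_nonpos_eq (show ((t - s, x - y) : ℝ × ℝ).1 ≤ 0 from h1),
          heatKernelST_nonpos_eq (show ((t, x - y) : ℝ × ℝ).1 ≤ 0 by dsimp only; linarith)]
        simp only [sub_zero, sub_self, abs_zero]
        exact div_nonneg (by positivity) hN3.le
      · push_neg at ht3
        have hxbig : N / 2 ≤ |x| := by
          rcases hdich with h | h
          · exfalso
            have habs : |t| < 2 * r := abs_lt.2 ⟨by linarith, by linarith⟩
            have h1 : Real.sqrt |t| ≤ Real.sqrt (2 * r) := Real.sqrt_le_sqrt habs.le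
            have h2 : Real.sqrt (2 * r) ≤ 2 * r := by
              calc Real.sqrt (2 * r) ≤ Real.sqrt ((2 * r) ^ 2) :=
                    Real.sqrt_le_sqrt (by nlinarith)
                _ = 2 * r := Real.sqrt_sq (by linarith)
            linarith
          · exact h
        have hxy4 : N / 4 ≤ |x - y| := by
          have h2 : |x| - |y| ≤ |x - y| := abs_sub_abs_le_abs_sub x y
          linarith
        have hbd : ∀ τ : ℝ, τ ≤ 3 * r → heatKernelST (τ, x - y) ≤ 3072 * r / N ^ 3 := by
          intro τ hτ
          by_cases hτ0 : 0 < τ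
          · rw [heatKernelST_pos_eq (show ((τ, x - y) : ℝ × ℝ).1 > 0 from hτ0)]
            have h1 := Pf_le_three (x := x - y) hτ0
            have h2 : 16 * τ / (Real.sqrt τ + |x - y|) ^ 3 ≤ 16 * (3 * r) / (N / 4) ^ 3 := by
              apply div_le_div₀ (by positivity) (by linarith) (pow_pos (by linarith) 3)
              apply pow_le_pow_left₀ (by linarith)
              linarith [Real.sqrt_nonneg τ]
            have h3 : 16 * (3 * r) / (N / 4) ^ 3 = 3072 * r / N ^ 3 := by
              rw [show (N / 4) ^ 3 = N ^ 3 / 64 by ring, div_div_eq_mul_div]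
              ring
            dsimp only
            linarith
          · rw [heatKernelST_nonpos_eq (show ((τ, x - y) : ℝ × ℝ).1 ≤ 0 from not_lt.1 hτ0)]
            exact div_nonneg (by positivity) hN3.le
        have hb1 := hbd (t - s) (by linarith [neg_abs_le s, le_abs_self s])
        have hb2 := hbd t (by linarith)
        have hn1 := heatKernelST_nonneg (t - s, x - y)
        have hn2 := heatKernelST_nonneg (t, x - y)
        calc |heatKernelST (t - s, x - y) - heatKernelST (t, x - y)|
            ≤ 3072 * r / N ^ 3 + 3072 * r / N ^ 3 := by
              rw [abs_sub_le_iff]; constructor <;> nlinarith [div_nonneg (by positivity : (0:ℝ) ≤ 3072 * r) hN3.le]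
          _ ≤ 6144 * r ^ 2 / N ^ 3 := by
              rw [← add_div, div_le_div_iff₀ hN3 hN3]
              nlinarith [mul_le_mul_of_nonneg_right (show r ≤ r ^ 2 by nlinarith) hN3.le]
  have hsplit : heatKernelST (t - s, x - y) - heatKernelST (t, x)
      + y * (if 0 < t then Pd t x else 0)
      = (heatKernelST (t - s, x - y) - heatKernelST (t, x - y))
        + (heatKernelST (t, x - y) - heatKernelST (t, x)
          + y * (if 0 < t then Pd t x else 0)) := by ring
  rw [hsplit]
  calc |_ + _| ≤ _ := abs_add_le _ _
    _ ≤ 6144 * r ^ 2 / N ^ 3 + 4096 * r ^ 2 / N ^ 3 := add_le_add htm hsp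
    _ = 10240 * r ^ 2 / N ^ 3 := by ring

lemma measurable_heatKernelST : Measurable heatKernelST := by
  unfold heatKernelST
  apply Measurable.ite
  · exact measurableSet_lt measurable_const measurable_fst
  · exact (Real.continuous_sqrt.measurable.comp (measurable_const.mul measurable_fst)).inv.mul
      (Real.continuous_exp.measurable.comp
        (((measurable_snd.pow_const 2).neg).div (measurable_const.mul measurable_fst)))
  · exact measurable_const

lemma integrable_box {g : ℝ × ℝ → ℝ} {c r : ℝ} (hg : Measurable g) (hc : 0 ≤ c)
    (hsupp : ∀ w, g w ≠ 0 → w ∈ Set.Icc ((-r, -r) : ℝ × ℝ) (r, r))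
    (hbd : ∀ w, g w ≠ 0 → |g w| ≤ c) :
    Integrable g := by
  have hK : MeasurableSet (Set.Icc ((-r, -r) : ℝ × ℝ) (r, r)) := measurableSet_Icc
  have hKfin : volume (Set.Icc ((-r, -r) : ℝ × ℝ) (r, r)) < ⊤ :=
    isCompact_Icc.measure_lt_top
  apply Integrable.mono'
    (g := (Set.Icc ((-r, -r) : ℝ × ℝ) (r, r)).indicator fun _ => c)
  · exact (integrable_indicator_iff hK).2 (integrableOn_const hKfin.ne)
  · exact hg.aestronglyMeasurable
  · refine Filter.Eventually.of_forall fun w => ?_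
    rw [Real.norm_eq_abs]
    by_cases h : g w = 0
    · rw [h, abs_zero]
      exact Set.indicator_nonneg (fun _ _ => hc) w
    · rw [Set.indicator_of_mem (hsupp w h)]
      exact hbd w h

lemma integral_box_bound {g : ℝ × ℝ → ℝ} {c r : ℝ} (hg : Measurable g) (hc : 0 ≤ c)
    (hsupp : ∀ w, g w ≠ 0 → w ∈ Set.Icc ((-r, -r) : ℝ × ℝ) (r, r))
    (hbd : ∀ w, g w ≠ 0 → |g w| ≤ c) :
    |∫ w, g w| ≤ c * (volume (Set.Icc ((-r, -r) : ℝ × ℝ) (r, r))).toReal := by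
  have hK : MeasurableSet (Set.Icc ((-r, -r) : ℝ × ℝ) (r, r)) := measurableSet_Icc
  have hKfin : volume (Set.Icc ((-r, -r) : ℝ × ℝ) (r, r)) < ⊤ :=
    isCompact_Icc.measure_lt_top
  have hind : Integrable ((Set.Icc ((-r, -r) : ℝ × ℝ) (r, r)).indicator fun _ => c) :=
    (integrable_indicator_iff hK).2 (integrableOn_const hKfin.ne)
  rw [← Real.norm_eq_abs]
  calc ‖∫ w, g w‖ ≤ ∫ w, (Set.Icc ((-r, -r) : ℝ × ℝ) (r, r)).indicator (fun _ => c) w := by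
        apply norm_integral_le_of_norm_le hind
        refine Filter.Eventually.of_forall fun w => ?_
        rw [Real.norm_eq_abs]
        by_cases h : g w = 0
        · rw [h, abs_zero]
          exact Set.indicator_nonneg (fun _ _ => hc) w
        · rw [Set.indicator_of_mem (hsupp w h)]
          exact hbd w h
    _ = c * (volume (Set.Icc ((-r, -r) : ℝ × ℝ) (r, r))).toReal := by
        rw [integral_indicator_const c hK, smul_eq_mul, mul_comm, measureReal_def]

lemma lintegral_heat_slice (τ ξ : ℝ) :
    (∫⁻ y : ℝ, ENNReal.ofReal (heatKernelST (τ, ξ - y))) ≤ 1 := by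
  by_cases hτ : 0 < τ
  · have hb : 0 < 1 / (4 * τ) := by positivity
    have hint0 : Integrable (fun v : ℝ => Real.exp (-(1 / (4 * τ)) * v ^ 2)) :=
      integrable_exp_neg_mul_sq hb
    have heq : ∀ y : ℝ, heatKernelST (τ, ξ - y)
        = (Real.sqrt (4 * Real.pi * τ))⁻¹ * Real.exp (-(1 / (4 * τ)) * (y - ξ) ^ 2) := by
      intro y
      rw [heatKernelST_pos_eq (show ((τ, ξ - y) : ℝ × ℝ).1 > 0 from hτ)]
      unfold Pf
      congr 1
      rw [show (-(((τ, ξ - y) : ℝ × ℝ).2 ^ 2) / (4 * τ) : ℝ)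
        = -(1 / (4 * τ)) * (y - ξ) ^ 2 by dsimp only; field_simp; ring]
    have hint : Integrable (fun y : ℝ => heatKernelST (τ, ξ - y)) := by
      simp_rw [heq]
      exact (hint0.comp_sub_right ξ).const_mul _
    have hval : (∫ y : ℝ, heatKernelST (τ, ξ - y)) = 1 := by
      simp_rw [heq]
      rw [MeasureTheory.integral_const_mul,
        integral_sub_right_eq_self (fun v : ℝ => Real.exp (-(1 / (4 * τ)) * v ^ 2)) ξ,
        integral_gaussian,
        show Real.pi / (1 / (4 * τ)) = 4 * Real.pi * τ by field_simp,
        inv_mul_cancel₀ (Real.sqrt_ne_zero'.2 (by positivity))]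
    rw [← MeasureTheory.ofReal_integral_eq_lintegral_ofReal hint
      (Filter.Eventually.of_forall fun y => heatKernelST_nonneg _), hval]
    simp
  · have h0 : ∀ y : ℝ, heatKernelST (τ, ξ - y) = 0 := fun y =>
      heatKernelST_nonpos_eq (not_lt.1 hτ)
    simp [h0]

lemma conv_global_bound {Q : ℝ × ℝ → ℝ} {M r : ℝ} (hQmeas : Measurable Q)
    (hM : ∀ w, |Q w| ≤ M) (hr : 0 < r)
    (hsupp : ∀ w : ℝ × ℝ, Q w ≠ 0 → |w.1| ≤ r) (z : ℝ × ℝ) :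
    |∫ w : ℝ × ℝ, heatKernelST (z - w) * Q w| ≤ M * (2 * r) := by
  have hM0 : 0 ≤ M := le_trans (abs_nonneg _) (hM 0)
  have hfmeas : Measurable fun w : ℝ × ℝ => heatKernelST (z - w) * Q w :=
    (measurable_heatKernelST.comp (measurable_const.sub measurable_id)).mul hQmeas
  rw [← Real.norm_eq_abs]
  refine le_trans (MeasureTheory.norm_integral_le_lintegral_norm _) ?_
  have key : (∫⁻ w : ℝ × ℝ, ENNReal.ofReal ‖heatKernelST (z - w) * Q w‖)
      ≤ ENNReal.ofReal (M * (2 * r)) := by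
    rw [MeasureTheory.Measure.volume_eq_prod,
      MeasureTheory.lintegral_prod _
        (hfmeas.norm.ennreal_ofReal.aemeasurable)]
    have inner : ∀ s : ℝ,
        (∫⁻ y : ℝ, ENNReal.ofReal ‖heatKernelST (z - (s, y)) * Q (s, y)‖)
        ≤ (Set.Icc (-r) r).indicator (fun _ => ENNReal.ofReal M) s := by
      intro s
      by_cases hsr : |s| ≤ r
      · rw [Set.indicator_of_mem (Set.mem_Icc.2 (abs_le.1 hsr))]
        have hptw : ∀ y : ℝ, ENNReal.ofReal ‖heatKernelST (z - (s, y)) * Q (s, y)‖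
            ≤ ENNReal.ofReal M * ENNReal.ofReal (heatKernelST (z.1 - s, z.2 - y)) := by
          intro y
          rw [← ENNReal.ofReal_mul hM0]
          apply ENNReal.ofReal_le_ofReal
          have hz : z - (s, y) = (z.1 - s, z.2 - y) := rfl
          rw [hz, Real.norm_eq_abs, abs_mul,
            abs_of_nonneg (heatKernelST_nonneg (z.1 - s, z.2 - y))]
          calc heatKernelST (z.1 - s, z.2 - y) * |Q (s, y)|
              ≤ heatKernelST (z.1 - s, z.2 - y) * M :=
                mul_le_mul_of_nonneg_left (hM _) (heatKernelST_nonneg _)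
            _ = M * heatKernelST (z.1 - s, z.2 - y) := mul_comm _ _
        calc (∫⁻ y : ℝ, ENNReal.ofReal ‖heatKernelST (z - (s, y)) * Q (s, y)‖)
            ≤ ∫⁻ y : ℝ, ENNReal.ofReal M * ENNReal.ofReal (heatKernelST (z.1 - s, z.2 - y)) :=
              MeasureTheory.lintegral_mono hptw
          _ = ENNReal.ofReal M * ∫⁻ y : ℝ, ENNReal.ofReal (heatKernelST (z.1 - s, z.2 - y)) :=
              MeasureTheory.lintegral_const_mul _
                ((measurable_heatKernelST.comp
                  (measurable_const.prodMk (measurable_const.sub measurable_id))).ennreal_ofReal)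
          _ ≤ ENNReal.ofReal M * 1 :=
              mul_le_mul_right (lintegral_heat_slice (z.1 - s) z.2) _
          _ = ENNReal.ofReal M := mul_one _
      · have hq : ∀ y : ℝ, Q (s, y) = 0 := by
          intro y
          by_contra h
          exact hsr (hsupp (s, y) h)
        simp [hq]
    calc (∫⁻ s : ℝ, ∫⁻ y : ℝ, ENNReal.ofReal ‖heatKernelST (z - (s, y)) * Q (s, y)‖)
        ≤ ∫⁻ s : ℝ, (Set.Icc (-r) r).indicator (fun _ => ENNReal.ofReal M) s :=
          MeasureTheory.lintegral_mono inner
      _ = ENNReal.ofReal M * volume (Set.Icc (-r) r) :=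
          MeasureTheory.lintegral_indicator_const measurableSet_Icc _
      _ = ENNReal.ofReal (M * (2 * r)) := by
          rw [Real.volume_Icc, ← ENNReal.ofReal_mul hM0]
          congr 1
          ring
  calc (∫⁻ w : ℝ × ℝ, ENNReal.ofReal ‖heatKernelST (z - w) * Q w‖).toReal
      ≤ (ENNReal.ofReal (M * (2 * r))).toReal := ENNReal.toReal_mono ENNReal.ofReal_ne_top key
    _ = M * (2 * r) := ENNReal.toReal_ofReal (by positivity)

/-- If `Q` is a compactly supported, bounded, measurable space-time kernel which integrates
to zero and annihilates `(t,x) ↦ x`, then the space-time convolution `P ⋆ Q` with the heat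
kernel is bounded by `C (|z|⁻¹ ∧ |z|⁻³)` in the parabolic norm. -/
theorem heatKernel_conv_bound (Q : ℝ × ℝ → ℝ)
    (hQmeas : Measurable Q) (hQsupp : HasCompactSupport Q)
    (hQbdd : ∃ M : ℝ, ∀ z, |Q z| ≤ M)
    (hQint : ∫ z : ℝ × ℝ, Q z = 0)
    (hQx : ∫ z : ℝ × ℝ, z.2 * Q z = 0) :
    ∃ C : ℝ, ∀ z : ℝ × ℝ, z ≠ 0 →
      |∫ w : ℝ × ℝ, heatKernelST (z - w) * Q w|
        ≤ C * min (pNorm z)⁻¹ ((pNorm z ^ 3)⁻¹) := by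
  obtain ⟨M, hM⟩ := hQbdd
  have hM0 : 0 ≤ M := le_trans (abs_nonneg _) (hM 0)
  obtain ⟨r0, hr0⟩ := hQsupp.isBounded.subset_closedBall 0
  set r := max r0 1 with hrdef
  have hr1 : (1:ℝ) ≤ r := le_max_right _ _
  have hrpos : (0:ℝ) < r := lt_of_lt_of_le one_pos hr1
  have hsupp : ∀ w : ℝ × ℝ, Q w ≠ 0 → |w.1| ≤ r ∧ |w.2| ≤ r := by
    intro w hw
    have hw1 : w ∈ tsupport Q := subset_tsupport Q (Function.mem_support.2 hw)
    have h2 := hr0 hw1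
    rw [Metric.mem_closedBall, dist_zero_right] at h2
    constructor
    · calc |w.1| = ‖w.1‖ := rfl
        _ ≤ ‖w‖ := norm_fst_le w
        _ ≤ r0 := h2
        _ ≤ r := le_max_left _ _
    · calc |w.2| = ‖w.2‖ := rfl
        _ ≤ ‖w‖ := norm_snd_le w
        _ ≤ r0 := h2
        _ ≤ r := le_max_left _ _
  have hboxmem : ∀ w : ℝ × ℝ, Q w ≠ 0 → w ∈ Set.Icc ((-r, -r) : ℝ × ℝ) (r, r) := by
    intro w hw
    obtain ⟨h1, h2⟩ := hsupp w hw
    rw [Set.mem_Icc]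
    exact ⟨Prod.le_def.2 ⟨(abs_le.1 h1).1, (abs_le.1 h2).1⟩,
      Prod.le_def.2 ⟨(abs_le.1 h1).2, (abs_le.1 h2).2⟩⟩
  set V := (volume (Set.Icc ((-r, -r) : ℝ × ℝ) (r, r))).toReal with hV
  have hV0 : 0 ≤ V := ENNReal.toReal_nonneg
  refine ⟨M * (2 * r) * (8 * r) ^ 3 + M * (10240 * r ^ 2) * V, ?_⟩
  intro z hz
  have hNpos : 0 < pNorm z := by
    rcases eq_or_ne z.1 0 with h1 | h1
    · have h2 : z.2 ≠ 0 := by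
        intro h2; exact hz (Prod.ext h1 h2)
      have h3 := abs_pos.2 h2
      have h4 := Real.sqrt_nonneg |z.1|
      unfold pNorm
      linarith
    · have h3 := Real.sqrt_pos.2 (abs_pos.2 h1)
      have h4 := abs_nonneg z.2
      unfold pNorm
      linarith
  have hN3 : 0 < pNorm z ^ 3 := pow_pos hNpos 3
  have hmin0 : 0 ≤ min (pNorm z)⁻¹ ((pNorm z ^ 3)⁻¹) :=
    le_min (inv_nonneg.2 hNpos.le) (inv_nonneg.2 hN3.le)
  by_cases hbig : 8 * r ≤ pNorm z
  · -- far regime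
    have hptw : ∀ w : ℝ × ℝ, Q w ≠ 0 →
        |heatKernelST (z - w) - heatKernelST z + w.2 * (if 0 < z.1 then Pd z.1 z.2 else 0)|
          ≤ 10240 * r ^ 2 / pNorm z ^ 3 := by
      intro w hw
      obtain ⟨h1, h2⟩ := hsupp w hw
      exact heat_pointwise (t := z.1) (x := z.2) (s := w.1) (y := w.2) hr1 h1 h2 hbig
    have hB0 : 0 ≤ 10240 * r ^ 2 / pNorm z ^ 3 := div_nonneg (by positivity) hN3.le
    have hRmeas : Measurable fun w : ℝ × ℝ =>
        (heatKernelST (z - w) - heatKernelST z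
          + w.2 * (if 0 < z.1 then Pd z.1 z.2 else 0)) * Q w :=
      (((measurable_heatKernelST.comp (measurable_const.sub measurable_id)).sub
        measurable_const).add (measurable_snd.mul_const _)).mul hQmeas
    have hsupp_R : ∀ w : ℝ × ℝ,
        (heatKernelST (z - w) - heatKernelST z
          + w.2 * (if 0 < z.1 then Pd z.1 z.2 else 0)) * Q w ≠ 0 →
        w ∈ Set.Icc ((-r, -r) : ℝ × ℝ) (r, r) := fun w hw =>
      hboxmem w (fun h0 => hw (by rw [h0, mul_zero]))
    have hbd_R : ∀ w : ℝ × ℝ,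
        (heatKernelST (z - w) - heatKernelST z
          + w.2 * (if 0 < z.1 then Pd z.1 z.2 else 0)) * Q w ≠ 0 →
        |(heatKernelST (z - w) - heatKernelST z
          + w.2 * (if 0 < z.1 then Pd z.1 z.2 else 0)) * Q w|
          ≤ 10240 * r ^ 2 / pNorm z ^ 3 * M := by
      intro w hw
      have hQw : Q w ≠ 0 := fun h0 => hw (by rw [h0, mul_zero])
      rw [abs_mul]
      exact mul_le_mul (hptw w hQw) (hM w) (abs_nonneg _) hB0
    have hI_R : Integrable fun w : ℝ × ℝ =>
        (heatKernelST (z - w) - heatKernelST z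
          + w.2 * (if 0 < z.1 then Pd z.1 z.2 else 0)) * Q w :=
      integrable_box hRmeas (mul_nonneg hB0 hM0) hsupp_R hbd_R
    have hI_Q : Integrable Q :=
      integrable_box hQmeas hM0 hboxmem (fun w _ => hM w)
    have hI_yQ : Integrable (fun w : ℝ × ℝ => w.2 * Q w) :=
      integrable_box (measurable_snd.mul hQmeas) (mul_nonneg hrpos.le hM0)
        (fun w hw => hboxmem w (fun h0 => hw (by rw [h0, mul_zero])))
        (fun w hw => by
          have hQw : Q w ≠ 0 := fun h0 => hw (by rw [h0, mul_zero])
          rw [abs_mul]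
          exact mul_le_mul (hsupp w hQw).2 (hM w) (abs_nonneg _) hrpos.le)
    have hfun : (fun w : ℝ × ℝ => heatKernelST (z - w) * Q w)
        = fun w : ℝ × ℝ =>
          (heatKernelST (z - w) - heatKernelST z
            + w.2 * (if 0 < z.1 then Pd z.1 z.2 else 0)) * Q w
          + (heatKernelST z * Q w
            - (if 0 < z.1 then Pd z.1 z.2 else 0) * (w.2 * Q w)) :=
      funext fun w => by ring
    have hI_a : Integrable (fun w : ℝ × ℝ => heatKernelST z * Q w) := hI_Q.const_mul _
    have hI_b : Integrable (fun w : ℝ × ℝ =>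
        (if 0 < z.1 then Pd z.1 z.2 else 0) * (w.2 * Q w)) := hI_yQ.const_mul _
    have hI_2 : Integrable (fun w : ℝ × ℝ => heatKernelST z * Q w
        - (if 0 < z.1 then Pd z.1 z.2 else 0) * (w.2 * Q w)) := hI_a.sub hI_b
    have heval : (∫ w : ℝ × ℝ, heatKernelST (z - w) * Q w)
        = ∫ w : ℝ × ℝ, (heatKernelST (z - w) - heatKernelST z
            + w.2 * (if 0 < z.1 then Pd z.1 z.2 else 0)) * Q w := by
      rw [hfun, MeasureTheory.integral_add hI_R hI_2,
        MeasureTheory.integral_sub hI_a hI_b,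
        MeasureTheory.integral_const_mul, MeasureTheory.integral_const_mul, hQint, hQx]
      ring
    rw [heval]
    have hbound := integral_box_bound hRmeas (mul_nonneg hB0 hM0) hsupp_R hbd_R
    have hN1 : (1:ℝ) ≤ pNorm z := le_trans (by linarith) hbig
    have hmineq : min (pNorm z)⁻¹ ((pNorm z ^ 3)⁻¹) = (pNorm z ^ 3)⁻¹ := by
      apply min_eq_right
      apply inv_anti₀ hNpos
      nlinarith [mul_le_mul_of_nonneg_left hN1 hNpos.le,
        mul_le_mul_of_nonneg_left (mul_le_mul_of_nonneg_left hN1 hNpos.le) hNpos.le]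
    rw [hmineq]
    calc |∫ w : ℝ × ℝ, (heatKernelST (z - w) - heatKernelST z
            + w.2 * (if 0 < z.1 then Pd z.1 z.2 else 0)) * Q w|
        ≤ 10240 * r ^ 2 / pNorm z ^ 3 * M * V := hbound
      _ = M * (10240 * r ^ 2) * V * (pNorm z ^ 3)⁻¹ := by ring
      _ ≤ (M * (2 * r) * (8 * r) ^ 3 + M * (10240 * r ^ 2) * V) * (pNorm z ^ 3)⁻¹ := by
          apply mul_le_mul_of_nonneg_right _ (inv_nonneg.2 hN3.le)
          have h1 : 0 ≤ M * (2 * r) * (8 * r) ^ 3 :=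
            mul_nonneg (mul_nonneg hM0 (by linarith)) (pow_nonneg (by linarith) 3)
          linarith
  · -- near regime
    push_neg at hbig
    have hglobal := conv_global_bound hQmeas hM hrpos (fun w hw => (hsupp w hw).1) z
    have hmin_lb : (((8 * r) ^ 3)⁻¹ : ℝ) ≤ min (pNorm z)⁻¹ ((pNorm z ^ 3)⁻¹) := by
      apply le_min
      · apply inv_anti₀ hNpos
        have h8 : (0:ℝ) ≤ (8 * r) * (8 * r - 1) * (8 * r + 1) :=
          mul_nonneg (mul_nonneg (by linarith) (by linarith)) (by linarith)
        nlinarith [h8]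
      · apply inv_anti₀ hN3
        exact pow_le_pow_left₀ hNpos.le hbig.le 3
    calc |∫ w : ℝ × ℝ, heatKernelST (z - w) * Q w| ≤ M * (2 * r) := hglobal
      _ = M * (2 * r) * (8 * r) ^ 3 * ((8 * r) ^ 3)⁻¹ := by
          rw [mul_assoc, mul_inv_cancel₀ (by positivity), mul_one]
      _ ≤ M * (2 * r) * (8 * r) ^ 3 * min (pNorm z)⁻¹ ((pNorm z ^ 3)⁻¹) :=
          mul_le_mul_of_nonneg_left hmin_lb (by positivity)
      _ ≤ (M * (2 * r) * (8 * r) ^ 3 + M * (10240 * r ^ 2) * V)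
            * min (pNorm z)⁻¹ ((pNorm z ^ 3)⁻¹) := by
          apply mul_le_mul_of_nonneg_right _ hmin0
          have h1 : 0 ≤ M * (10240 * r ^ 2) * V :=
            mul_nonneg (mul_nonneg hM0 (by positivity)) hV0
          linarith
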